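/- Let F_{[1:r]}, X_{[1:2]}, Y_{[1:2]} satisfy the Markov chains of T(r), and suppose W_1,...,W_r are random variables mutually independent of each other and of (F_{[1:r]}, X_{[1:2]}, Y_{[1:2]}). Define F̄_i = (F_i, W_i). Then F̄_{[1:r]}, X_{[1:2]}, Y_{[1:2]} also satisfy the Markov chains of T(r), and for each i, I(X_1; F̄_{[1:r]} | X_2) = I(X_1; F_{[1:r]} | X_2), I(X_2; F̄_{[1:r]} | X_1) = I(X_2; F_{[1:r]} | X_1), and I(F̄_{[1:r]}; Y_{[1:2]} | X_{[1:2]}) = I(F_{[1:r]}; Y_{[1:2]} | X_{[1:2]}). -/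
import Mathlib


open Finset

/-- Total variation distance between two pmfs on a finite set: half the ℓ¹ distance. -/
noncomputable def TV {α : Type*} [Fintype α] (p q : α → ℝ) : ℝ :=
  (∑ a, |p a - q a|) / 2

/-- Shannon entropy of a pmf. -/
noncomputable def ent {α : Type*} [Fintype α] (p : α → ℝ) : ℝ :=
  -∑ a, p a * Real.log (p a)

/-- Binary entropy function. -/
noncomputable def hb (t : ℝ) : ℝ := -t * Real.log t - (1 - t) * Real.log (1 - t)

/-- `p` is a probability mass function. -/
def IsPMF {α : Type*} [Fintype α] (p : α → ℝ) : Prop :=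
  (∀ a, 0 ≤ p a) ∧ ∑ a, p a = 1

/-- Pushforward pmf (distribution of the random variable `X` under `μ`). -/
noncomputable def pushf {Ω α : Type*} [Fintype Ω] [DecidableEq α]
    (μ : Ω → ℝ) (X : Ω → α) : α → ℝ :=
  fun a => ∑ ω ∈ Finset.univ.filter (fun ω => X ω = a), μ ω

/-- Entropy of a random variable `X` on a finite probability space with pmf `μ`. -/
noncomputable def Hent {Ω α : Type*} [Fintype Ω] [Fintype α] [DecidableEq α]
    (μ : Ω → ℝ) (X : Ω → α) : ℝ := ent (pushf μ X)

/-- Conditional mutual information `I(A ; C | B)` of random variables on a finite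
probability space with pmf `μ`, defined via entropies:
`I(A;C|B) = H(A,B) + H(B,C) - H(A,B,C) - H(B)`. -/
noncomputable def condMI {Ω α β γ : Type*} [Fintype Ω] [Fintype α] [Fintype β] [Fintype γ]
    [DecidableEq α] [DecidableEq β] [DecidableEq γ]
    (μ : Ω → ℝ) (A : Ω → α) (B : Ω → β) (C : Ω → γ) : ℝ :=
  Hent μ (fun ω => (A ω, B ω)) + Hent μ (fun ω => (B ω, C ω))
    - Hent μ (fun ω => (A ω, B ω, C ω)) - Hent μ B

open Function
lemma sum_pushf {Ω α : Type*} [Fintype Ω] [Fintype α] [DecidableEq α]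
    (μ : Ω → ℝ) (X : Ω → α) : ∑ a, pushf μ X a = ∑ ω, μ ω := by
  unfold pushf
  exact Finset.sum_fiberwise _ _ _

lemma pushf_comp {Ω α β : Type*} [Fintype Ω] [Fintype α] [DecidableEq α] [DecidableEq β]
    (μ : Ω → ℝ) (X : Ω → α) (g : α → β) :
    pushf μ (fun ω => g (X ω)) = pushf (pushf μ X) g := by
  funext b
  unfold pushf
  rw [Finset.sum_filter, Finset.sum_filter]
  simp_rw [Finset.sum_filter]
  have h1 : ∀ x : α, (if g x = b then ∑ ω : Ω, (if X ω = x then μ ω else 0) else 0)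
      = ∑ ω : Ω, (if g x = b then (if X ω = x then μ ω else 0) else 0) := by
    intro x; split <;> simp
  simp_rw [h1]
  rw [Finset.sum_comm]
  congr 1
  funext ω
  rw [Finset.sum_eq_single (X ω)]
  · simp
  · intro t _ ht
    have : (if X ω = t then μ ω else 0) = 0 := by simp [Ne.symm ht]
    simp [this]
  · simp

lemma pushf_apply_inj {α β : Type*} [Fintype α] [DecidableEq β]
    (p : α → ℝ) {g : α → β} (hg : Injective g) (a : α) :
    pushf p g (g a) = p a := by
  unfold pushf
  apply Finset.sum_eq_single
  · intro b hb hne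
    simp only [Finset.mem_filter, Finset.mem_univ, true_and] at hb
    exact absurd (hg hb) hne
  · intro ha; exact absurd (by simp) ha

lemma ent_pushf_inj {α β : Type*} [Fintype α] [Fintype β] [DecidableEq β]
    (p : α → ℝ) {g : α → β} (hg : Injective g) :
    ent (pushf p g) = ent p := by
  unfold ent
  congr 1
  rw [← Finset.sum_subset (Finset.subset_univ (Finset.univ.image g))]
  · rw [Finset.sum_image (fun a _ b _ h => hg h)]
    congr 1; funext a; rw [pushf_apply_inj p hg]
  · intro b _ hb
    have : pushf p g b = 0 := by
      unfold pushf
      apply Finset.sum_eq_zero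
      intro a ha
      exfalso; apply hb
      simp only [Finset.mem_filter, Finset.mem_univ, true_and] at ha
      exact Finset.mem_image.mpr ⟨a, Finset.mem_univ a, ha⟩
    simp [this]

lemma ent_prod {α β : Type*} [Fintype α] [Fintype β]
    (p : α → ℝ) (q : β → ℝ) (hp : ∑ a, p a = 1) (hq : ∑ b, q b = 1) :
    ent (fun z : α × β => p z.1 * q z.2) = ent p + ent q := by
  unfold ent
  rw [Fintype.sum_prod_type]
  have key : ∀ a b, p a * q b * Real.log (p a * q b)
      = p a * Real.log (p a) * q b + p a * (q b * Real.log (q b)) := by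
    intro a b
    by_cases ha : p a = 0
    · simp [ha]
    by_cases hb : q b = 0
    · simp [hb]
    rw [Real.log_mul ha hb]; ring
  simp_rw [key, Finset.sum_add_distrib, ← Finset.mul_sum, hq, mul_one]
  rw [← Finset.sum_mul, hp]
  ring

lemma pushf_prodMap {α β α' β' : Type*} [Fintype α] [Fintype β]
    [DecidableEq α'] [DecidableEq β']
    (p : α → ℝ) (q : β → ℝ) (u : α → α') (v : β → β') (c : α') (d : β') :
    pushf (fun z : α × β => p z.1 * q z.2) (Prod.map u v) (c, d)
      = pushf p u c * pushf q v d := by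
  unfold pushf
  rw [Finset.sum_filter, Finset.sum_filter, Finset.sum_filter, Fintype.sum_prod_type]
  have h1 : ∀ (a : α) (b : β),
      (if Prod.map u v (a, b) = (c, d) then p a * q b else 0)
      = (if u a = c then p a else 0) * (if v b = d then q b else 0) := by
    intro a b
    by_cases h : u a = c <;> by_cases h' : v b = d <;>
      simp [Prod.map, Prod.ext_iff, h, h']
  simp_rw [h1]
  rw [Finset.sum_mul_sum]

lemma pushf_pair_map {Ω α β α' β' : Type*} [Fintype Ω] [Fintype α] [Fintype β]
    [DecidableEq α] [DecidableEq β] [DecidableEq α'] [DecidableEq β']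
    (μ : Ω → ℝ) (A : Ω → α) (B : Ω → β)
    (hprod : pushf μ (fun ω => (A ω, B ω)) = fun z => pushf μ A z.1 * pushf μ B z.2)
    (u : α → α') (v : β → β') :
    pushf μ (fun ω => (u (A ω), v (B ω)))
      = fun z => pushf μ (fun ω => u (A ω)) z.1 * pushf μ (fun ω => v (B ω)) z.2 := by
  have e1 : (fun ω => (u (A ω), v (B ω)))
      = fun ω => Prod.map u v ((fun ω => (A ω, B ω)) ω) := rfl
  rw [e1, pushf_comp, hprod]
  funext z
  obtain ⟨c, d⟩ := z
  rw [pushf_comp μ A u, pushf_comp μ B v]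
  exact pushf_prodMap _ _ u v c d

lemma Hent_pair_indep {Ω α β : Type*} [Fintype Ω] [Fintype α] [Fintype β]
    [DecidableEq α] [DecidableEq β]
    (μ : Ω → ℝ) (hμ : ∑ ω, μ ω = 1) (A : Ω → α) (B : Ω → β)
    (hprod : pushf μ (fun ω => (A ω, B ω)) = fun z => pushf μ A z.1 * pushf μ B z.2) :
    Hent μ (fun ω => (A ω, B ω)) = Hent μ A + Hent μ B := by
  unfold Hent
  rw [hprod]
  exact ent_prod _ _ (by rw [sum_pushf]; exact hμ) (by rw [sum_pushf]; exact hμ)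

/-- Key lemma: if (A,B) are independent, then for any functions u, v and injective g,
`H(g(u(A), v(B))) = H(u(A)) + H(v(B))`. -/
lemma Hent_key {Ω α β α' β' γ : Type*} [Fintype Ω] [Fintype α] [Fintype β]
    [Fintype α'] [Fintype β'] [Fintype γ]
    [DecidableEq α] [DecidableEq β] [DecidableEq α'] [DecidableEq β'] [DecidableEq γ]
    (μ : Ω → ℝ) (hμ : ∑ ω, μ ω = 1) (A : Ω → α) (B : Ω → β)
    (hprod : pushf μ (fun ω => (A ω, B ω)) = fun z => pushf μ A z.1 * pushf μ B z.2)
    (u : α → α') (v : β → β') (g : α' × β' → γ) (hg : Injective g) :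
    Hent μ (fun ω => g (u (A ω), v (B ω)))
      = Hent μ (fun ω => u (A ω)) + Hent μ (fun ω => v (B ω)) := by
  have h := pushf_pair_map μ A B hprod u v
  have e : (fun ω => g (u (A ω), v (B ω)))
      = fun ω => g ((fun ω => (u (A ω), v (B ω))) ω) := rfl
  have h2 : Hent μ (fun ω => g (u (A ω), v (B ω)))
      = Hent μ (fun ω => (u (A ω), v (B ω))) := by
    unfold Hent
    rw [e, pushf_comp]
    exact ent_pushf_inj _ hg
  rw [h2]
  exact Hent_pair_indep μ hμ _ _ h

lemma pushf_fst {α β : Type*} [Fintype α] [Fintype β] [DecidableEq α]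
    (f : α → ℝ) (g : β → ℝ) :
    pushf (fun z : α × β => f z.1 * g z.2) Prod.fst = fun a => f a * ∑ b, g b := by
  funext a
  unfold pushf
  rw [Finset.sum_filter, Fintype.sum_prod_type]
  have h1 : ∀ (x : α) (y : β), (if (x, y).1 = a then f x * g y else 0)
      = (if x = a then f x else 0) * g y := by
    intro x y; by_cases h : x = a <;> simp [h]
  simp_rw [h1, ← Finset.mul_sum, ← Finset.sum_mul]
  congr 1
  simp [Finset.sum_ite_eq']

set_option maxHeartbeats 4000000
set_option synthInstance.maxSize 2000
set_option synthInstance.maxHeartbeats 1000000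

/-- if `F_{[1:r]}, X_{[1:2]}, Y_{[1:2]}` satisfy the Markov chains of
`T(r)` (paper-odd rounds are 0-indexed `Even i.val`) and `W_1,...,W_r` are mutually
independent of each other and of `(F_{[1:r]}, X_{[1:2]}, Y_{[1:2]})`, then
`F̄_i = (F_i, W_i)` also satisfy the Markov chains of `T(r)`, and the three mutual
information quantities `I(X_1;F̄|X_2)`, `I(X_2;F̄|X_1)`, `I(F̄;Y_{[1:2]}|X_{[1:2]})`
are unchanged. -/
theorem padding_with_independent_randomness {Ω 𝓕 𝒲 𝒳₁ 𝒳₂ 𝒴₁ 𝒴₂ : Type*} {r : ℕ}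
    [Fintype Ω] [Fintype 𝓕] [Fintype 𝒲] [Fintype 𝒳₁] [Fintype 𝒳₂]
    [Fintype 𝒴₁] [Fintype 𝒴₂]
    [DecidableEq 𝓕] [DecidableEq 𝒲] [DecidableEq 𝒳₁] [DecidableEq 𝒳₂]
    [DecidableEq 𝒴₁] [DecidableEq 𝒴₂]
    (μ : Ω → ℝ) (hμ : IsPMF μ)
    (F : Fin r → Ω → 𝓕) (W : Fin r → Ω → 𝒲)
    (X1 : Ω → 𝒳₁) (X2 : Ω → 𝒳₂) (Y1 : Ω → 𝒴₁) (Y2 : Ω → 𝒴₂)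
    (hodd : ∀ i : Fin r, Even i.val →
      condMI μ (F i)
        (fun ω => ((fun j : Fin i.val => F (Fin.castLE i.isLt.le j) ω), X1 ω)) X2 = 0)
    (heven : ∀ i : Fin r, Odd i.val →
      condMI μ (F i)
        (fun ω => ((fun j : Fin i.val => F (Fin.castLE i.isLt.le j) ω), X2 ω)) X1 = 0)
    (hY1 : condMI μ Y1 (fun ω => ((fun i : Fin r => F i ω), X1 ω))
      (fun ω => (X2 ω, Y2 ω)) = 0)
    (hY2 : condMI μ Y2 (fun ω => ((fun i : Fin r => F i ω), X2 ω))
      (fun ω => (X1 ω, Y1 ω)) = 0)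
    -- `W_1,...,W_r` are mutually independent and independent of everything else:
    (hind : pushf μ (fun ω => ((fun i : Fin r => W i ω),
        (X1 ω, X2 ω, Y1 ω, Y2 ω, fun i : Fin r => F i ω)))
      = fun z => (∏ i : Fin r, pushf μ (W i) (z.1 i)) *
          pushf μ (fun ω => (X1 ω, X2 ω, Y1 ω, Y2 ω, fun i : Fin r => F i ω)) z.2) :
    (∀ i : Fin r, Even i.val →
      condMI μ (fun ω => (F i ω, W i ω))
        (fun ω => ((fun j : Fin i.val =>
            (F (Fin.castLE i.isLt.le j) ω, W (Fin.castLE i.isLt.le j) ω)), X1 ω))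
        X2 = 0) ∧
    (∀ i : Fin r, Odd i.val →
      condMI μ (fun ω => (F i ω, W i ω))
        (fun ω => ((fun j : Fin i.val =>
            (F (Fin.castLE i.isLt.le j) ω, W (Fin.castLE i.isLt.le j) ω)), X2 ω))
        X1 = 0) ∧
    (condMI μ Y1 (fun ω => ((fun i : Fin r => (F i ω, W i ω)), X1 ω))
      (fun ω => (X2 ω, Y2 ω)) = 0) ∧
    (condMI μ Y2 (fun ω => ((fun i : Fin r => (F i ω, W i ω)), X2 ω))
      (fun ω => (X1 ω, Y1 ω)) = 0) ∧
    condMI μ X1 X2 (fun ω => fun i : Fin r => (F i ω, W i ω))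
      = condMI μ X1 X2 (fun ω => fun i : Fin r => F i ω) ∧
    condMI μ X2 X1 (fun ω => fun i : Fin r => (F i ω, W i ω))
      = condMI μ X2 X1 (fun ω => fun i : Fin r => F i ω) ∧
    condMI μ (fun ω => fun i : Fin r => (F i ω, W i ω))
        (fun ω => (X1 ω, X2 ω)) (fun ω => (Y1 ω, Y2 ω))
      = condMI μ (fun ω => fun i : Fin r => F i ω)
          (fun ω => (X1 ω, X2 ω)) (fun ω => (Y1 ω, Y2 ω)) := by
  have hWt : pushf μ (fun ω => fun i : Fin r => W i ω)
      = fun w => ∏ i, pushf μ (W i) (w i) := by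
    have e : (fun ω => fun i : Fin r => W i ω)
        = fun ω => Prod.fst ((fun ω => ((fun i : Fin r => W i ω),
            (X1 ω, X2 ω, Y1 ω, Y2 ω, fun i : Fin r => F i ω))) ω) := rfl
    rw [e, pushf_comp, hind]
    have h := pushf_fst (fun w : Fin r → 𝒲 => ∏ i, pushf μ (W i) (w i))
      (pushf μ (fun ω => (X1 ω, X2 ω, Y1 ω, Y2 ω, fun i : Fin r => F i ω)))
    rw [h, sum_pushf, hμ.2]
    simp
  have hprodWR : pushf μ (fun ω => ((fun i : Fin r => W i ω),
        (X1 ω, X2 ω, Y1 ω, Y2 ω, fun i : Fin r => F i ω)))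
      = fun z => pushf μ (fun ω => fun i : Fin r => W i ω) z.1 *
          pushf μ (fun ω => (X1 ω, X2 ω, Y1 ω, Y2 ω, fun i : Fin r => F i ω)) z.2 := by
    rw [hind, hWt]
  refine ⟨?_, ?_, ?_, ?_, ?_, ?_, ?_⟩
  · intro i hi
    have h0 := hodd i hi
    have e11 := Hent_key μ hμ.2 (fun ω => fun i : Fin r => W i ω)
      (fun ω => (X1 ω, X2 ω, Y1 ω, Y2 ω, fun i : Fin r => F i ω)) hprodWR
      (fun w => (w i, fun j => w (Fin.castLE i.isLt.le j)))
      (fun z => (z.2.2.2.2 i, ((fun j => z.2.2.2.2 (Fin.castLE i.isLt.le j)), z.1)))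
      (fun p => ((p.2.1, p.1.1), ((fun j => (p.2.2.1 j, p.1.2 j)), p.2.2.2)))
      (by intro p q hpq; simp only [Prod.mk.injEq, funext_iff, forall_and] at hpq; simp_all [Prod.ext_iff, funext_iff])
    have e12 := Hent_key μ hμ.2 (fun ω => fun i : Fin r => W i ω)
      (fun ω => (X1 ω, X2 ω, Y1 ω, Y2 ω, fun i : Fin r => F i ω)) hprodWR
      (fun w => fun j => w (Fin.castLE i.isLt.le j))
      (fun z => (((fun j => z.2.2.2.2 (Fin.castLE i.isLt.le j)), z.1), z.2.1))
      (fun p => (((fun j => (p.2.1.1 j, p.1 j)), p.2.1.2), p.2.2))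
      (by intro p q hpq; simp only [Prod.mk.injEq, funext_iff, forall_and] at hpq; simp_all [Prod.ext_iff, funext_iff])
    have e13 := Hent_key μ hμ.2 (fun ω => fun i : Fin r => W i ω)
      (fun ω => (X1 ω, X2 ω, Y1 ω, Y2 ω, fun i : Fin r => F i ω)) hprodWR
      (fun w => (w i, fun j => w (Fin.castLE i.isLt.le j)))
      (fun z => (z.2.2.2.2 i, (((fun j => z.2.2.2.2 (Fin.castLE i.isLt.le j)), z.1), z.2.1)))
      (fun p => ((p.2.1, p.1.1), (((fun j => (p.2.2.1.1 j, p.1.2 j)), p.2.2.1.2), p.2.2.2)))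
      (by intro p q hpq; simp only [Prod.mk.injEq, funext_iff, forall_and] at hpq; simp_all [Prod.ext_iff, funext_iff])
    have e14 := Hent_key μ hμ.2 (fun ω => fun i : Fin r => W i ω)
      (fun ω => (X1 ω, X2 ω, Y1 ω, Y2 ω, fun i : Fin r => F i ω)) hprodWR
      (fun w => fun j => w (Fin.castLE i.isLt.le j))
      (fun z => ((fun j => z.2.2.2.2 (Fin.castLE i.isLt.le j)), z.1))
      (fun p => ((fun j => (p.2.1 j, p.1 j)), p.2.2))
      (by intro p q hpq; simp only [Prod.mk.injEq, funext_iff, forall_and] at hpq; simp_all [Prod.ext_iff, funext_iff])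
    dsimp only at e11 e12 e13 e14
    simp only [condMI] at h0 ⊢
    linarith
  · intro i hi
    have h0 := heven i hi
    have e21 := Hent_key μ hμ.2 (fun ω => fun i : Fin r => W i ω)
      (fun ω => (X1 ω, X2 ω, Y1 ω, Y2 ω, fun i : Fin r => F i ω)) hprodWR
      (fun w => (w i, fun j => w (Fin.castLE i.isLt.le j)))
      (fun z => (z.2.2.2.2 i, ((fun j => z.2.2.2.2 (Fin.castLE i.isLt.le j)), z.2.1)))
      (fun p => ((p.2.1, p.1.1), ((fun j => (p.2.2.1 j, p.1.2 j)), p.2.2.2)))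
      (by intro p q hpq; simp only [Prod.mk.injEq, funext_iff, forall_and] at hpq; simp_all [Prod.ext_iff, funext_iff])
    have e22 := Hent_key μ hμ.2 (fun ω => fun i : Fin r => W i ω)
      (fun ω => (X1 ω, X2 ω, Y1 ω, Y2 ω, fun i : Fin r => F i ω)) hprodWR
      (fun w => fun j => w (Fin.castLE i.isLt.le j))
      (fun z => (((fun j => z.2.2.2.2 (Fin.castLE i.isLt.le j)), z.2.1), z.1))
      (fun p => (((fun j => (p.2.1.1 j, p.1 j)), p.2.1.2), p.2.2))
      (by intro p q hpq; simp only [Prod.mk.injEq, funext_iff, forall_and] at hpq; simp_all [Prod.ext_iff, funext_iff])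
    have e23 := Hent_key μ hμ.2 (fun ω => fun i : Fin r => W i ω)
      (fun ω => (X1 ω, X2 ω, Y1 ω, Y2 ω, fun i : Fin r => F i ω)) hprodWR
      (fun w => (w i, fun j => w (Fin.castLE i.isLt.le j)))
      (fun z => (z.2.2.2.2 i, (((fun j => z.2.2.2.2 (Fin.castLE i.isLt.le j)), z.2.1), z.1)))
      (fun p => ((p.2.1, p.1.1), (((fun j => (p.2.2.1.1 j, p.1.2 j)), p.2.2.1.2), p.2.2.2)))
      (by intro p q hpq; simp only [Prod.mk.injEq, funext_iff, forall_and] at hpq; simp_all [Prod.ext_iff, funext_iff])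
    have e24 := Hent_key μ hμ.2 (fun ω => fun i : Fin r => W i ω)
      (fun ω => (X1 ω, X2 ω, Y1 ω, Y2 ω, fun i : Fin r => F i ω)) hprodWR
      (fun w => fun j => w (Fin.castLE i.isLt.le j))
      (fun z => ((fun j => z.2.2.2.2 (Fin.castLE i.isLt.le j)), z.2.1))
      (fun p => ((fun j => (p.2.1 j, p.1 j)), p.2.2))
      (by intro p q hpq; simp only [Prod.mk.injEq, funext_iff, forall_and] at hpq; simp_all [Prod.ext_iff, funext_iff])
    dsimp only at e21 e22 e23 e24
    simp only [condMI] at h0 ⊢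
    linarith
  · have h0 := hY1
    have e31 := Hent_key μ hμ.2 (fun ω => fun i : Fin r => W i ω)
      (fun ω => (X1 ω, X2 ω, Y1 ω, Y2 ω, fun i : Fin r => F i ω)) hprodWR
      (fun w => w)
      (fun z => (z.2.2.1, (z.2.2.2.2, z.1)))
      (fun p => (p.2.1, ((fun i => (p.2.2.1 i, p.1 i)), p.2.2.2)))
      (by intro p q hpq; simp only [Prod.mk.injEq, funext_iff, forall_and] at hpq; simp_all [Prod.ext_iff, funext_iff])
    have e32 := Hent_key μ hμ.2 (fun ω => fun i : Fin r => W i ω)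
      (fun ω => (X1 ω, X2 ω, Y1 ω, Y2 ω, fun i : Fin r => F i ω)) hprodWR
      (fun w => w)
      (fun z => ((z.2.2.2.2, z.1), (z.2.1, z.2.2.2.1)))
      (fun p => (((fun i => (p.2.1.1 i, p.1 i)), p.2.1.2), p.2.2))
      (by intro p q hpq; simp only [Prod.mk.injEq, funext_iff, forall_and] at hpq; simp_all [Prod.ext_iff, funext_iff])
    have e33 := Hent_key μ hμ.2 (fun ω => fun i : Fin r => W i ω)
      (fun ω => (X1 ω, X2 ω, Y1 ω, Y2 ω, fun i : Fin r => F i ω)) hprodWR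
      (fun w => w)
      (fun z => (z.2.2.1, ((z.2.2.2.2, z.1), (z.2.1, z.2.2.2.1))))
      (fun p => (p.2.1, (((fun i => (p.2.2.1.1 i, p.1 i)), p.2.2.1.2), p.2.2.2)))
      (by intro p q hpq; simp only [Prod.mk.injEq, funext_iff, forall_and] at hpq; simp_all [Prod.ext_iff, funext_iff])
    have e34 := Hent_key μ hμ.2 (fun ω => fun i : Fin r => W i ω)
      (fun ω => (X1 ω, X2 ω, Y1 ω, Y2 ω, fun i : Fin r => F i ω)) hprodWR
      (fun w => w)
      (fun z => (z.2.2.2.2, z.1))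
      (fun p => ((fun i => (p.2.1 i, p.1 i)), p.2.2))
      (by intro p q hpq; simp only [Prod.mk.injEq, funext_iff, forall_and] at hpq; simp_all [Prod.ext_iff, funext_iff])
    dsimp only at e31 e32 e33 e34
    simp only [condMI] at h0 ⊢
    linarith
  · have h0 := hY2
    have e41 := Hent_key μ hμ.2 (fun ω => fun i : Fin r => W i ω)
      (fun ω => (X1 ω, X2 ω, Y1 ω, Y2 ω, fun i : Fin r => F i ω)) hprodWR
      (fun w => w)
      (fun z => (z.2.2.2.1, (z.2.2.2.2, z.2.1)))
      (fun p => (p.2.1, ((fun i => (p.2.2.1 i, p.1 i)), p.2.2.2)))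
      (by intro p q hpq; simp only [Prod.mk.injEq, funext_iff, forall_and] at hpq; simp_all [Prod.ext_iff, funext_iff])
    have e42 := Hent_key μ hμ.2 (fun ω => fun i : Fin r => W i ω)
      (fun ω => (X1 ω, X2 ω, Y1 ω, Y2 ω, fun i : Fin r => F i ω)) hprodWR
      (fun w => w)
      (fun z => ((z.2.2.2.2, z.2.1), (z.1, z.2.2.1)))
      (fun p => (((fun i => (p.2.1.1 i, p.1 i)), p.2.1.2), p.2.2))
      (by intro p q hpq; simp only [Prod.mk.injEq, funext_iff, forall_and] at hpq; simp_all [Prod.ext_iff, funext_iff])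
    have e43 := Hent_key μ hμ.2 (fun ω => fun i : Fin r => W i ω)
      (fun ω => (X1 ω, X2 ω, Y1 ω, Y2 ω, fun i : Fin r => F i ω)) hprodWR
      (fun w => w)
      (fun z => (z.2.2.2.1, ((z.2.2.2.2, z.2.1), (z.1, z.2.2.1))))
      (fun p => (p.2.1, (((fun i => (p.2.2.1.1 i, p.1 i)), p.2.2.1.2), p.2.2.2)))
      (by intro p q hpq; simp only [Prod.mk.injEq, funext_iff, forall_and] at hpq; simp_all [Prod.ext_iff, funext_iff])
    have e44 := Hent_key μ hμ.2 (fun ω => fun i : Fin r => W i ω)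
      (fun ω => (X1 ω, X2 ω, Y1 ω, Y2 ω, fun i : Fin r => F i ω)) hprodWR
      (fun w => w)
      (fun z => (z.2.2.2.2, z.2.1))
      (fun p => ((fun i => (p.2.1 i, p.1 i)), p.2.2))
      (by intro p q hpq; simp only [Prod.mk.injEq, funext_iff, forall_and] at hpq; simp_all [Prod.ext_iff, funext_iff])
    dsimp only at e41 e42 e43 e44
    simp only [condMI] at h0 ⊢
    linarith
  · have e52 := Hent_key μ hμ.2 (fun ω => fun i : Fin r => W i ω)
      (fun ω => (X1 ω, X2 ω, Y1 ω, Y2 ω, fun i : Fin r => F i ω)) hprodWR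
      (fun w => w)
      (fun z => (z.2.1, z.2.2.2.2))
      (fun p => (p.2.1, fun i => (p.2.2 i, p.1 i)))
      (by intro p q hpq; simp only [Prod.mk.injEq, funext_iff, forall_and] at hpq; simp_all [Prod.ext_iff, funext_iff])
    have e53 := Hent_key μ hμ.2 (fun ω => fun i : Fin r => W i ω)
      (fun ω => (X1 ω, X2 ω, Y1 ω, Y2 ω, fun i : Fin r => F i ω)) hprodWR
      (fun w => w)
      (fun z => (z.1, (z.2.1, z.2.2.2.2)))
      (fun p => (p.2.1, (p.2.2.1, fun i => (p.2.2.2 i, p.1 i))))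
      (by intro p q hpq; simp only [Prod.mk.injEq, funext_iff, forall_and] at hpq; simp_all [Prod.ext_iff, funext_iff])
    dsimp only at e52 e53
    simp only [condMI]
    linarith
  · have e62 := Hent_key μ hμ.2 (fun ω => fun i : Fin r => W i ω)
      (fun ω => (X1 ω, X2 ω, Y1 ω, Y2 ω, fun i : Fin r => F i ω)) hprodWR
      (fun w => w)
      (fun z => (z.1, z.2.2.2.2))
      (fun p => (p.2.1, fun i => (p.2.2 i, p.1 i)))
      (by intro p q hpq; simp only [Prod.mk.injEq, funext_iff, forall_and] at hpq; simp_all [Prod.ext_iff, funext_iff])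
    have e63 := Hent_key μ hμ.2 (fun ω => fun i : Fin r => W i ω)
      (fun ω => (X1 ω, X2 ω, Y1 ω, Y2 ω, fun i : Fin r => F i ω)) hprodWR
      (fun w => w)
      (fun z => (z.2.1, (z.1, z.2.2.2.2)))
      (fun p => (p.2.1, (p.2.2.1, fun i => (p.2.2.2 i, p.1 i))))
      (by intro p q hpq; simp only [Prod.mk.injEq, funext_iff, forall_and] at hpq; simp_all [Prod.ext_iff, funext_iff])
    dsimp only at e62 e63
    simp only [condMI]
    linarith
  · have e71 := Hent_key μ hμ.2 (fun ω => fun i : Fin r => W i ω)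
      (fun ω => (X1 ω, X2 ω, Y1 ω, Y2 ω, fun i : Fin r => F i ω)) hprodWR
      (fun w => w)
      (fun z => (z.2.2.2.2, (z.1, z.2.1)))
      (fun p => ((fun i => (p.2.1 i, p.1 i)), p.2.2))
      (by intro p q hpq; simp only [Prod.mk.injEq, funext_iff, forall_and] at hpq; simp_all [Prod.ext_iff, funext_iff])
    have e73 := Hent_key μ hμ.2 (fun ω => fun i : Fin r => W i ω)
      (fun ω => (X1 ω, X2 ω, Y1 ω, Y2 ω, fun i : Fin r => F i ω)) hprodWR
      (fun w => w)
      (fun z => (z.2.2.2.2, ((z.1, z.2.1), (z.2.2.1, z.2.2.2.1))))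
      (fun p => ((fun i => (p.2.1 i, p.1 i)), p.2.2))
      (by intro p q hpq; simp only [Prod.mk.injEq, funext_iff, forall_and] at hpq; simp_all [Prod.ext_iff, funext_iff])
    dsimp only at e71 e73
    simp only [condMI]
    linarith
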